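/- arXiv:1605.00663 — 5 statements merged into one kernel-verified Lean document; each statement's English description precedes it below -/
import Mathlib

section
/- For every positive integer k, the Möbius function satisfies μ(k) = Σ_{F ∈ Γ(k)} (-1)^{|F|}, where Γ(k) is the collection of finite sets F with {0,k} ⊆ F ⊆ {0,1,...,k} and gcd of the elements of F equal to 1. -/
open Finset

lemma sum_moebius_div (n : ℕ) :
    ∑ d ∈ n.divisors, (ArithmeticFunction.moebius d : ℤ) = if n = 1 then 1 else 0 := by
  have h := congrArg (fun f : ArithmeticFunction ℤ => f n)
    ArithmeticFunction.moebius_mul_coe_zeta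
  rw [ArithmeticFunction.coe_mul_zeta_apply] at h
  rw [h, ArithmeticFunction.one_apply]

/-- μ(k) = Σ_{F ∈ Γ(k)} (-1)^{|F|}. -/
theorem moebius_eq_sum_gamma (k : ℕ) (hk : 0 < k) :
    ArithmeticFunction.moebius k =
      ∑ F ∈ (Finset.range (k + 1)).powerset.filter
          (fun F => 0 ∈ F ∧ k ∈ F ∧ F.gcd id = 1),
        (-1 : ℤ) ^ F.card := by
  classical
  set P : Finset (Finset ℕ) :=
    (Finset.range (k+1)).powerset.filter (fun F => 0 ∈ F ∧ k ∈ F) with hP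
  set D := k.divisors with hD
  set f : ℕ → ℤ := fun e => ∑ F ∈ P.filter (fun F => F.gcd id = e), (-1 : ℤ) ^ F.card with hf
  set S : ℕ → ℤ := fun d => ∑ F ∈ P.filter (fun F => ∀ x ∈ F, d ∣ x), (-1 : ℤ) ^ F.card with hS
  have hPmem : ∀ {F}, F ∈ P ↔ F ⊆ Finset.range (k+1) ∧ 0 ∈ F ∧ k ∈ F := by
    intro F; simp [hP, Finset.mem_filter, Finset.mem_powerset, and_assoc]
  -- gcd of any F ∈ P divides k
  have hgcdD : ∀ F ∈ P, F.gcd id ∈ D := by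
    intro F hF
    obtain ⟨hsub, h0, hkF⟩ := hPmem.mp hF
    exact Nat.mem_divisors.mpr ⟨Finset.gcd_dvd hkF, hk.ne'⟩
  -- Lemma A : S d = if d = k then 1 else 0, for d ∈ D
  have hA : ∀ d ∈ D, S d = if d = k then 1 else 0 := by
    intro d hd
    obtain ⟨hdk, -⟩ := Nat.mem_divisors.mp hd
    have hd0 : 0 < d := Nat.pos_of_dvd_of_pos hdk hk
    set M : Finset ℕ := (Finset.range (k+1)).filter (fun x => d ∣ x ∧ x ≠ 0 ∧ x ≠ k) with hM
    have key : S d = ∑ A ∈ M.powerset, (-1 : ℤ) ^ A.card := by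
      rw [hS]
      refine Finset.sum_nbij' (fun F => (F.erase k).erase 0)
        (fun A => insert 0 (insert k A)) ?_ ?_ ?_ ?_ ?_
      · intro F hF
        rw [Finset.mem_filter] at hF
        obtain ⟨hFP, hdvd⟩ := hF
        obtain ⟨hsub, h0, hkF⟩ := hPmem.mp hFP
        rw [Finset.mem_powerset]
        intro x hx
        obtain ⟨hx0, hx'⟩ := Finset.mem_erase.mp hx
        obtain ⟨hxk, hxF⟩ := Finset.mem_erase.mp hx'
        exact Finset.mem_filter.mpr ⟨hsub hxF, hdvd x hxF, hx0, hxk⟩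
      · intro A hA
        rw [Finset.mem_powerset] at hA
        rw [Finset.mem_filter]
        constructor
        · refine hPmem.mpr ⟨?_, Finset.mem_insert_self _ _,
            Finset.mem_insert_of_mem (Finset.mem_insert_self _ _)⟩
          intro x hx
          rcases Finset.mem_insert.mp hx with rfl | hx
          · simp
          rcases Finset.mem_insert.mp hx with rfl | hx
          · simp
          · exact (Finset.mem_filter.mp (hA hx)).1
        · intro x hx
          rcases Finset.mem_insert.mp hx with rfl | hx
          · exact dvd_zero d
          rcases Finset.mem_insert.mp hx with rfl | hx
          · exact hdk
          · exact (Finset.mem_filter.mp (hA hx)).2.1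
      · intro F hF
        rw [Finset.mem_filter] at hF
        obtain ⟨hsub, h0, hkF⟩ := hPmem.mp hF.1
        have hk0 : k ≠ 0 := hk.ne'
        beta_reduce
        rw [Finset.erase_right_comm, Finset.insert_erase
            (Finset.mem_erase.mpr ⟨hk0, hkF⟩)]
        exact Finset.insert_erase h0
      · intro A hA
        rw [Finset.mem_powerset] at hA
        have h0A : 0 ∉ A := fun h => ((Finset.mem_filter.mp (hA h)).2.2.1 rfl)
        have hkA : k ∉ A := fun h => ((Finset.mem_filter.mp (hA h)).2.2.2 rfl)
        beta_reduce
        rw [Finset.erase_insert_of_ne hk.ne, Finset.erase_insert hkA,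
          Finset.erase_insert h0A]
      · intro F hF
        rw [Finset.mem_filter] at hF
        obtain ⟨hsub, h0, hkF⟩ := hPmem.mp hF.1
        have h0k : (0:ℕ) ≠ k := hk.ne
        have hc1 : ((F.erase k).erase 0).card = F.card - 1 - 1 := by
          rw [Finset.card_erase_of_mem (Finset.mem_erase.mpr ⟨h0k, h0⟩),
            Finset.card_erase_of_mem hkF]
        have hc2 : 2 ≤ F.card := by
          have : ({0, k} : Finset ℕ) ⊆ F := by
            intro x hx; rcases Finset.mem_insert.mp hx with rfl | hx
            · exact h0
            · rw [Finset.mem_singleton] at hx; subst hx; exact hkF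
          calc 2 = ({0, k} : Finset ℕ).card := by rw [Finset.card_insert_of_notMem (by simp [h0k]), Finset.card_singleton]
          _ ≤ F.card := Finset.card_le_card this
        rw [hc1]
        have : F.card = (F.card - 1 - 1) + 2 := by omega
        rw [this, pow_add]
        simp
    rw [key, Finset.sum_powerset_neg_one_pow_card]
    congr 1
    rw [eq_iff_iff]
    constructor
    · intro hMe
      by_contra hdk'
      have hdlt : d < k := lt_of_le_of_ne (Nat.le_of_dvd hk hdk) hdk'
      have : d ∈ M := by
        rw [hM, Finset.mem_filter, Finset.mem_range]
        exact ⟨by omega, dvd_refl d, hd0.ne', hdk'⟩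
      rw [hMe] at this; exact absurd this (Finset.notMem_empty d)
    · rintro rfl
      rw [hM, Finset.filter_eq_empty_iff]
      intro x hx
      rw [Finset.mem_range] at hx
      rintro ⟨hdvd, hx0, hxk⟩
      have := Nat.le_of_dvd (Nat.pos_of_ne_zero hx0) hdvd
      omega
  -- Lemma B : S d = ∑ e ∈ D.filter (d ∣ ·), f e
  have hB : ∀ d, S d = ∑ e ∈ D.filter (fun e => d ∣ e), f e := by
    intro d
    have : S d = ∑ F ∈ P.filter (fun F => d ∣ F.gcd id), (-1 : ℤ) ^ F.card := by
      rw [hS]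
      apply Finset.sum_congr _ (fun _ _ => rfl)
      apply Finset.filter_congr
      intro F _
      exact (Finset.dvd_gcd_iff).symm
    rw [this]
    have hmap : ∀ F ∈ P.filter (fun F => d ∣ F.gcd id),
        F.gcd id ∈ D.filter (fun e => d ∣ e) := by
      intro F hF
      rw [Finset.mem_filter] at hF ⊢
      exact ⟨hgcdD F hF.1, hF.2⟩
    rw [← Finset.sum_fiberwise_of_maps_to hmap (fun F => (-1:ℤ)^F.card)]
    simp only [hf]
    apply Finset.sum_congr rfl
    intro e he
    rw [Finset.mem_filter] at he
    congr 1
    rw [Finset.filter_filter]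
    apply Finset.filter_congr
    intro F hF
    constructor
    · rintro ⟨-, h⟩; exact h
    · intro h; exact ⟨h ▸ he.2, h⟩
  -- Main computation
  have key : ∑ d ∈ D, (ArithmeticFunction.moebius d : ℤ) * S d = f 1 := by
    calc ∑ d ∈ D, (ArithmeticFunction.moebius d : ℤ) * S d
        = ∑ d ∈ D, ∑ e ∈ D, if d ∣ e then (ArithmeticFunction.moebius d : ℤ) * f e else 0 := by
          apply Finset.sum_congr rfl
          intro d _
          rw [hB d, Finset.mul_sum, ← Finset.sum_filter]
      _ = ∑ e ∈ D, ∑ d ∈ D, if d ∣ e then (ArithmeticFunction.moebius d : ℤ) * f e else 0 :=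
          Finset.sum_comm
      _ = ∑ e ∈ D, (∑ d ∈ e.divisors, (ArithmeticFunction.moebius d : ℤ)) * f e := by
          apply Finset.sum_congr rfl
          intro e he
          rw [Finset.sum_mul, ← Finset.sum_filter]
          apply Finset.sum_congr _ (fun _ _ => rfl)
          ext d
          rw [Finset.mem_filter, Nat.mem_divisors, Nat.mem_divisors]
          obtain ⟨hek, hk0⟩ := Nat.mem_divisors.mp he
          have he0 : e ≠ 0 := fun h => hk0 (zero_dvd_iff.mp (h ▸ hek))
          constructor
          · rintro ⟨-, h⟩; exact ⟨h, he0⟩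
          · rintro ⟨h, -⟩; exact ⟨⟨h.trans hek, hk0⟩, h⟩
      _ = f 1 := by
          rw [Finset.sum_congr rfl (fun e _ => by rw [sum_moebius_div e, ite_mul, one_mul, zero_mul])]
          rw [Finset.sum_ite_eq' D 1 f]
          rw [if_pos (Nat.mem_divisors.mpr ⟨one_dvd k, hk.ne'⟩)]
  -- evaluate LHS of key via hA
  have key2 : ∑ d ∈ D, (ArithmeticFunction.moebius d : ℤ) * S d
      = ArithmeticFunction.moebius k := by
    rw [Finset.sum_congr rfl (fun d hd => by rw [hA d hd, mul_ite, mul_one, mul_zero])]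
    rw [Finset.sum_ite_eq' D k (fun d => (ArithmeticFunction.moebius d : ℤ))]
    rw [if_pos (Nat.mem_divisors.mpr ⟨dvd_refl k, hk.ne'⟩)]
  have htarget : (∑ F ∈ (Finset.range (k + 1)).powerset.filter
      (fun F => 0 ∈ F ∧ k ∈ F ∧ F.gcd id = 1), (-1 : ℤ) ^ F.card) = f 1 := by
    rw [hf]
    congr 1
    rw [hP, Finset.filter_filter]
    apply Finset.filter_congr
    intro F _
    simp [and_assoc]
  rw [htarget, ← key, key2]
end

section
/- Let k be a positive integer that is not squarefree, and let s be the product of the distinct primes dividing k (the radical of k). Then s < k, and for every F ∈ Γ(k), the symmetric difference F △ {s} also belongs to Γ(k). -/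
lemma squarefree_prod_of_primes (t : Finset ℕ) (h : ∀ p ∈ t, p.Prime) :
    Squarefree (∏ p ∈ t, p) := by
  induction t using Finset.induction with
  | empty => simp only [Finset.prod_empty]; exact squarefree_one
  | insert _ _ hx ih =>
    rename_i a t
    rw [Finset.prod_insert hx]
    have ha := h a (Finset.mem_insert_self a t)
    have hcop : Nat.Coprime a (∏ p ∈ t, p) := by
      rw [ha.coprime_iff_not_dvd]
      intro hdvd
      obtain ⟨q, hq, hdq⟩ := (Nat.Prime.prime ha).dvd_finset_prod_iff _ |>.mp hdvd
      have := ((Nat.prime_dvd_prime_iff_eq ha (h q (Finset.mem_insert_of_mem hq))).mp hdq)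
      exact hx (this ▸ hq)
    exact (Nat.squarefree_mul hcop).mpr
      ⟨ha.squarefree, ih fun p hp => h p (Finset.mem_insert_of_mem hp)⟩

/-- for non-squarefree k with radical s, s < k and Γ(k) is closed
under symmetric difference with {s}. -/
theorem gamma_symmDiff_radical (k : ℕ) (hk : 0 < k) (hns : ¬ Squarefree k)
    (s : ℕ) (hs : s = ∏ p ∈ k.primeFactors, p) :
    s < k ∧
      ∀ F : Finset ℕ, F ⊆ Finset.range (k + 1) → 0 ∈ F → k ∈ F → F.gcd id = 1 →
        (symmDiff F {s} ⊆ Finset.range (k + 1) ∧ 0 ∈ symmDiff F {s} ∧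
          k ∈ symmDiff F {s} ∧ (symmDiff F {s}).gcd id = 1) := by
  have hsq : Squarefree s := by
    rw [hs]; exact squarefree_prod_of_primes _ fun p hp => Nat.prime_of_mem_primeFactors hp
  have hsdvd : s ∣ k := hs ▸ Nat.prod_primeFactors_dvd k
  have hne : s ≠ k := fun h => hns (h ▸ hsq)
  have hslt : s < k := lt_of_le_of_ne (Nat.le_of_dvd hk hsdvd) hne
  have hs0 : s ≠ 0 := hsq.ne_zero
  have hprime_dvd : ∀ p : ℕ, p.Prime → p ∣ k → p ∣ s := by
    intro p hp hpk
    rw [hs]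
    exact Finset.dvd_prod_of_mem _ (Nat.mem_primeFactors.mpr ⟨hp, hpk, hk.ne'⟩)
  refine ⟨hslt, fun F hF1 hF0 hFk hFg => ?_⟩
  have hmem : ∀ x, x ∈ symmDiff F {s} ↔ (x ∈ F ∧ x ≠ s) ∨ (x = s ∧ x ∉ F) := by
    intro x; rw [Finset.mem_symmDiff]; simp [and_comm]
  refine ⟨?_, ?_, ?_, ?_⟩
  · intro x hx
    rcases (hmem x).mp hx with ⟨hxF, _⟩ | ⟨hxs, _⟩
    · exact hF1 hxF
    · exact Finset.mem_range.mpr (hxs ▸ hslt.trans (Nat.lt_succ_self k))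
  · exact (hmem 0).mpr (Or.inl ⟨hF0, fun h => hs0 h.symm⟩)
  · exact (hmem k).mpr (Or.inl ⟨hFk, fun h => hne h.symm⟩)
  · by_cases hsF : s ∈ F
    · have heq : symmDiff F {s} = F.erase s := by
        ext x
        rw [hmem, Finset.mem_erase]
        constructor
        · rintro (⟨h1, h2⟩ | ⟨h1, h2⟩); exact ⟨h2, h1⟩; exact absurd (h1 ▸ hsF) h2
        · rintro ⟨h1, h2⟩; exact Or.inl ⟨h2, h1⟩
      rw [heq]
      by_contra hgcd
      obtain ⟨p, hp, hpd⟩ := Nat.exists_prime_and_dvd hgcd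
      have hpk : p ∣ k := hpd.trans (Finset.gcd_dvd (Finset.mem_erase.mpr ⟨fun h => hne h.symm, hFk⟩))
      have hps : p ∣ s := hprime_dvd p hp hpk
      have : p ∣ F.gcd id := by
        apply Finset.dvd_gcd
        intro b hb
        by_cases hbs : b = s
        · exact hbs ▸ hps
        · exact hpd.trans (Finset.gcd_dvd (Finset.mem_erase.mpr ⟨hbs, hb⟩))
      rw [hFg] at this
      exact hp.one_lt.ne' (Nat.eq_one_of_dvd_one this)
    · have heq : symmDiff F {s} = insert s F := by
        ext x
        rw [hmem, Finset.mem_insert]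
        constructor
        · rintro (⟨h1, _⟩ | ⟨h1, _⟩); exact Or.inr h1; exact Or.inl h1
        · rintro (h1 | h1)
          · exact Or.inr ⟨h1, h1 ▸ hsF⟩
          · exact Or.inl ⟨h1, fun h => hsF (h ▸ h1)⟩
      rw [heq, Finset.gcd_insert, hFg]
      simp
end

section
/- Let F be a face of vdW(n,k) with max(F) − min(F) ≥ 2, let x = min(F), y = max(F), d = gcdtr(F). Then d ∈ D(n,k,x,y) and the set {(f − x)/d : f ∈ F} belongs to Γ((y−x)/d). -/
/-- `F` is a face of the van der Waerden complex `vdW(n,k)`. -/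
def vdWFace (n k : ℕ) (F : Finset ℕ) : Prop :=
  ∃ x d : ℕ, 1 ≤ x ∧ 1 ≤ d ∧ x + k * d ≤ n ∧
    F ⊆ (Finset.range (k + 1)).image (fun i => x + i * d)

/-- `d ∈ D(n,k,x,y)`. -/
def memD (n k x y d : ℕ) : Prop :=
  1 ≤ d ∧ d ∣ y - x ∧
    vdWFace n k ((Finset.range ((y - x) / d + 1)).image (fun i => x + i * d))

/-- for a face F with max F − min F ≥ 2, x = min F, y = max F,
d = gcdtr F, we have d ∈ D(n,k,x,y) and {(f−x)/d : f ∈ F} ∈ Γ((y−x)/d). -/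
theorem face_decomposition (n k : ℕ) (F : Finset ℕ) (hF : vdWFace n k F)
    (hne : F.Nonempty) (hspread : 2 ≤ F.max' hne - F.min' hne)
    (x y d : ℕ) (hx : x = F.min' hne) (hy : y = F.max' hne)
    (hd : d = F.gcd (fun f => f - F.min' hne)) :
    memD n k x y d ∧
      (F.image (fun f => (f - x) / d) ⊆ Finset.range ((y - x) / d + 1) ∧
        0 ∈ F.image (fun f => (f - x) / d) ∧
        (y - x) / d ∈ F.image (fun f => (f - x) / d) ∧
        (F.image (fun f => (f - x) / d)).gcd id = 1) := by
  obtain ⟨x₀, d₀, hx₀, hd₀, hkn, hsub⟩ := hF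
  subst hx hy hd
  set x := F.min' hne with hx
  set y := F.max' hne with hy
  set d := F.gcd (fun f => f - x) with hd
  have hxF : x ∈ F := F.min'_mem hne
  have hyF : y ∈ F := F.max'_mem hne
  have hrep : ∀ f ∈ F, ∃ i ≤ k, f = x₀ + i * d₀ := by
    intro f hf
    have h := hsub hf
    simp only [Finset.mem_image, Finset.mem_range] at h
    obtain ⟨i, hi, hfi⟩ := h
    exact ⟨i, by omega, hfi.symm⟩
  obtain ⟨a, ha, hxa⟩ := hrep x hxF
  obtain ⟨b, hb, hyb⟩ := hrep y hyF
  have hab : a ≤ b := by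
    have h1 : x ≤ y := F.min'_le y hyF
    by_contra h
    push_neg at h
    have : b * d₀ < a * d₀ := (Nat.mul_lt_mul_right (by omega)).mpr h
    omega
  have hrep' : ∀ f ∈ F, ∃ i, a ≤ i ∧ i ≤ k ∧ f = x₀ + i * d₀ ∧ f - x = (i - a) * d₀ := by
    intro f hf
    obtain ⟨i, hi, hfi⟩ := hrep f hf
    have hxf : x ≤ f := F.min'_le f hf
    have hai : a ≤ i := by
      by_contra h
      push_neg at h
      have : i * d₀ < a * d₀ := (Nat.mul_lt_mul_right (by omega)).mpr h
      omega
    refine ⟨i, hai, hi, hfi, ?_⟩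
    rw [Nat.sub_mul]
    omega
  have hdy : d ∣ y - x := Finset.gcd_dvd hyF
  have hyx : 2 ≤ y - x := hspread
  have hd0 : d ≠ 0 := by
    rintro h
    rw [h] at hdy
    omega
  have hd₀d : d₀ ∣ d := by
    refine Finset.dvd_gcd fun f hf => ?_
    obtain ⟨i, _, _, _, hfx⟩ := hrep' f hf
    exact ⟨i - a, by rw [hfx, Nat.mul_comm]⟩
  obtain ⟨e, he⟩ := hd₀d
  have hyxba : y - x = (b - a) * d₀ := by
    rw [Nat.sub_mul]; omega
  refine ⟨⟨by omega, hdy, x₀, d₀, hx₀, hd₀, hkn, ?_⟩, ?_, ?_, ?_, ?_⟩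
  · intro z hz
    simp only [Finset.mem_image, Finset.mem_range] at hz ⊢
    obtain ⟨i, hi, hzi⟩ := hz
    have hi' : i ≤ (y - x) / d := by omega
    have hmul : i * d ≤ y - x := by
      calc i * d ≤ ((y - x) / d) * d := Nat.mul_le_mul_right d hi'
        _ = y - x := Nat.div_mul_cancel hdy
    have hie : i * e ≤ b - a := by
      have : (i * e) * d₀ ≤ (b - a) * d₀ := by
        rw [← hyxba]
        calc (i * e) * d₀ = i * (d₀ * e) := by ring
          _ = i * d := by rw [← he]
          _ ≤ y - x := hmul
      exact Nat.le_of_mul_le_mul_right this (by omega)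
    refine ⟨a + i * e, by omega, ?_⟩
    rw [← hzi, hxa, he]
    ring
  · intro z hz
    simp only [Finset.mem_image, Finset.mem_range] at hz ⊢
    obtain ⟨f, hf, hfz⟩ := hz
    have : (f - x) / d ≤ (y - x) / d :=
      Nat.div_le_div_right (Nat.sub_le_sub_right (F.le_max' f hf) x)
    omega
  · exact Finset.mem_image.mpr ⟨x, hxF, by simp⟩
  · exact Finset.mem_image.mpr ⟨y, hyF, rfl⟩
  · rw [Finset.gcd_image]
    exact Finset.gcd_div_eq_one hyF (by omega)
end

section
/- Define L(a) = lcm(1,...,a) and M(a) as the maximum of p^{α−1} over prime powers p^α exactly dividing L(a). Then the function a ↦ L(a)/M(a) is weakly increasing for integers a ≥ 2. -/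
/-- `L a = lcm(1, 2, …, a)`. -/
def vdWL (a : ℕ) : ℕ := (Finset.Icc 1 a).lcm id

/-- `M a` is the maximum of `p^(α−1)` over primes `p` with `p^α` exactly
dividing `L a`. -/
def vdWM (a : ℕ) : ℕ :=
  ((Finset.range (a + 1)).filter Nat.Prime).sup
    (fun p => p ^ ((vdWL a).factorization p - 1))

lemma finset_lcm_ne_zero (s : Finset ℕ) (h : ∀ n ∈ s, n ≠ 0) : s.lcm id ≠ 0 := by
  induction s using Finset.induction with
  | empty => simp
  | @insert x s hx ih =>
    rw [Finset.lcm_insert]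
    have hx0 : x ≠ 0 := h x (Finset.mem_insert_self x s)
    have hs0 : s.lcm id ≠ 0 := ih (fun n hn => h n (Finset.mem_insert_of_mem hn))
    exact Nat.lcm_ne_zero hx0 hs0

lemma vdWL_ne_zero (a : ℕ) : vdWL a ≠ 0 :=
  finset_lcm_ne_zero _ (fun n hn => by simp [Finset.mem_Icc] at hn; omega)

lemma vdWL_pos (a : ℕ) : 0 < vdWL a := Nat.pos_of_ne_zero (vdWL_ne_zero a)

lemma factorization_finset_lcm (s : Finset ℕ) (h : ∀ n ∈ s, n ≠ 0) (p : ℕ) :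
    (s.lcm id).factorization p = s.sup (fun n => n.factorization p) := by
  induction s using Finset.induction with
  | empty => simp
  | @insert x s hx ih =>
    have hx0 : x ≠ 0 := h x (Finset.mem_insert_self x s)
    have hs : ∀ n ∈ s, n ≠ 0 := fun n hn => h n (Finset.mem_insert_of_mem hn)
    rw [Finset.lcm_insert, Finset.sup_insert, ← ih hs]
    rw [show lcm (id x) (s.lcm id) = Nat.lcm x (s.lcm id) from rfl,
      Nat.factorization_lcm hx0 (finset_lcm_ne_zero s hs)]
    simp [Finsupp.sup_apply]

lemma factorization_vdWL (a : ℕ) (ha : 1 ≤ a) {p : ℕ} (hp : p.Prime) :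
    (vdWL a).factorization p = Nat.log p a := by
  apply le_antisymm
  · rw [vdWL, factorization_finset_lcm _ (fun n hn => by simp [Finset.mem_Icc] at hn; omega)]
    apply Finset.sup_le
    intro n hn
    simp only [Finset.mem_Icc] at hn
    rw [Nat.le_log_iff_pow_le hp.one_lt (by omega)]
    exact le_trans (Nat.ordProj_le p (by omega)) hn.2
  · rw [← Nat.Prime.pow_dvd_iff_le_factorization hp (vdWL_ne_zero a)]
    apply Finset.dvd_lcm
    simp only [Finset.mem_Icc]
    exact ⟨Nat.one_le_pow _ _ hp.pos, Nat.pow_log_le_self p (by omega)⟩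

lemma vdWM_pos (a : ℕ) (ha : 2 ≤ a) : 0 < vdWM a := by
  have h2 : 2 ∈ (Finset.range (a + 1)).filter Nat.Prime := by
    simp [Finset.mem_filter, Finset.mem_range, Nat.prime_two]; omega
  rw [vdWM]
  calc 0 < 2 ^ ((vdWL a).factorization 2 - 1) := pow_pos (by norm_num) _
    _ ≤ _ := Finset.le_sup (f := fun p => p ^ ((vdWL a).factorization p - 1)) h2

lemma vdWL_succ (a : ℕ) : vdWL (a + 1) = Nat.lcm (a + 1) (vdWL a) := by
  have : Finset.Icc 1 (a + 1) = insert (a + 1) (Finset.Icc 1 a) := by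
    ext x; simp [Finset.mem_Icc]; omega
  rw [vdWL, this, Finset.lcm_insert]; rfl

lemma dvd_vdWL_of_not_pp (a : ℕ) (ha : 2 ≤ a) (h : ¬ IsPrimePow (a + 1)) :
    (a + 1) ∣ vdWL a := by
  rw [← Nat.factorization_le_iff_dvd (by omega) (vdWL_ne_zero a)]
  intro q
  by_cases hq : q.Prime
  · set m := (a + 1).factorization q with hm
    rcases Nat.eq_zero_or_pos m with h0 | h0
    · simp [← hm, h0]
    · have hdvd : q ^ m ∣ a + 1 := Nat.ordProj_dvd _ _
      have hle : q ^ m ≤ a + 1 := Nat.le_of_dvd (by omega) hdvd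
      have hne : q ^ m ≠ a + 1 := by
        intro he
        exact h ⟨q, m, hq.prime, h0, he⟩
      rw [factorization_vdWL a (by omega) hq,
        Nat.le_log_iff_pow_le hq.one_lt (by omega : a ≠ 0)]
      omega
  · simp [Nat.factorization_eq_zero_of_not_prime _ hq]

lemma step_npp (a : ℕ) (ha : 2 ≤ a) (h : ¬ IsPrimePow (a + 1)) :
    vdWL (a + 1) = vdWL a ∧ vdWM (a + 1) = vdWM a := by
  have hL : vdWL (a + 1) = vdWL a := by
    rw [vdWL_succ]
    exact Nat.dvd_antisymm (Nat.lcm_dvd (dvd_vdWL_of_not_pp a ha h) dvd_rfl)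
      (Nat.dvd_lcm_right _ _)
  refine ⟨hL, ?_⟩
  have hnp : ¬ (a + 1).Prime := fun hp => h hp.isPrimePow
  rw [vdWM, vdWM, hL, Finset.range_add_one, Finset.filter_insert, if_neg hnp]

lemma step_pp (a : ℕ) (ha : 2 ≤ a) (p k : ℕ) (hp : p.Prime) (hk : 0 < k)
    (he : p ^ k = a + 1) :
    vdWL a * vdWM (a + 1) ≤ vdWL (a + 1) * vdWM a := by
  have hp1 : 1 < p := hp.one_lt
  have hpk1 : p ^ (k - 1) ≤ a := by
    have : p ^ (k - 1) < p ^ k := Nat.pow_lt_pow_right hp1 (by omega)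
    omega
  have hlog : Nat.log p a = k - 1 :=
    Nat.log_eq_of_pow_le_of_lt_pow hpk1 (by rw [Nat.sub_add_cancel hk, he]; omega)
  have hlogs : Nat.log p (a + 1) = k :=
    Nat.log_eq_of_pow_le_of_lt_pow (le_of_eq he)
      (by rw [← he, pow_succ]; nlinarith [pow_pos (by omega : 0 < p) k])
  have hlogq : ∀ q : ℕ, q.Prime → q ≠ p → Nat.log q (a + 1) = Nat.log q a := by
    intro q hq hqp
    refine le_antisymm ?_ (Nat.log_mono_right (by omega))
    have h1 : q ^ Nat.log q (a + 1) ≤ a + 1 := Nat.pow_log_le_self q (by omega)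
    have hne : q ^ Nat.log q (a + 1) ≠ a + 1 := by
      intro hqe
      rcases Nat.eq_zero_or_pos (Nat.log q (a + 1)) with h0 | h0
      · rw [h0] at hqe; simp at hqe; omega
      · have : q ∣ p ^ k := by
          rw [he, ← hqe]; exact dvd_pow_self q (by omega)
        exact hqp ((Nat.prime_dvd_prime_iff_eq hq hp).mp (hq.dvd_of_dvd_pow this))
    rw [Nat.le_log_iff_pow_le hq.one_lt (by omega : a ≠ 0)]
    omega
  have hdvd : p * vdWL a ∣ vdWL (a + 1) := by
    rw [← Nat.factorization_le_iff_dvd (Nat.mul_ne_zero hp.pos.ne' (vdWL_ne_zero a)) (vdWL_ne_zero (a + 1))]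
    intro q
    rw [Nat.factorization_mul hp.ne_zero (vdWL_ne_zero a)]
    simp only [Finsupp.add_apply]
    by_cases hq : q.Prime
    · rw [factorization_vdWL a (by omega) hq, factorization_vdWL (a + 1) (by omega) hq]
      by_cases hqp : q = p
      · subst hqp
        rw [hq.factorization, hlog, hlogs]
        simp only [Finsupp.single_eq_same]
        omega
      · rw [hp.factorization, hlogq q hq hqp]
        simp [Finsupp.single_apply, Ne.symm hqp]
    · simp [Nat.factorization_eq_zero_of_not_prime _ hq]
  have hM : vdWM (a + 1) ≤ p * vdWM a := by
    rw [vdWM]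
    apply Finset.sup_le
    intro q hq
    simp only [Finset.mem_filter, Finset.mem_range] at hq
    obtain ⟨hqlt, hqprime⟩ := hq
    rw [factorization_vdWL (a + 1) (by omega) hqprime]
    by_cases hqp : q = p
    · subst hqp
      rw [hlogs]
      rcases Nat.lt_or_ge k 2 with h2 | h2
      · have hk1 : k = 1 := by omega
        rw [hk1]
        simpa using Nat.succ_le_of_lt (Nat.mul_pos hp.pos (vdWM_pos a ha))
      · have hpa : q ≤ a := le_trans (Nat.le_self_pow (by omega) q) hpk1
        have hpmem : q ∈ (Finset.range (a + 1)).filter Nat.Prime := by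
          simp only [Finset.mem_filter, Finset.mem_range]
          exact ⟨by omega, hqprime⟩
        have hterm : q ^ ((vdWL a).factorization q - 1) ≤ vdWM a :=
          Finset.le_sup (f := fun p => p ^ ((vdWL a).factorization p - 1)) hpmem
        rw [factorization_vdWL a (by omega) hqprime, hlog] at hterm
        calc q ^ (k - 1) = q * q ^ (k - 1 - 1) := by
              rw [← pow_succ']; congr 1; omega
          _ ≤ q * vdWM a := Nat.mul_le_mul_left q hterm
    · rw [hlogq q hqprime hqp]
      have hqne : q ≠ a + 1 := by
        intro hq1
        apply hqp
        have hpd : p ∣ q := by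
          rw [← hq1] at he; rw [← he]; exact dvd_pow_self p (by omega)
        exact ((Nat.prime_dvd_prime_iff_eq hp hqprime).mp hpd).symm
      have hpmem : q ∈ (Finset.range (a + 1)).filter Nat.Prime := by
        simp only [Finset.mem_filter, Finset.mem_range]
        exact ⟨by omega, hqprime⟩
      have hterm : q ^ ((vdWL a).factorization q - 1) ≤ vdWM a :=
        Finset.le_sup (f := fun p => p ^ ((vdWL a).factorization p - 1)) hpmem
      rw [factorization_vdWL a (by omega) hqprime] at hterm
      exact le_trans hterm (Nat.le_mul_of_pos_left _ hp.pos)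
  calc vdWL a * vdWM (a + 1) ≤ vdWL a * (p * vdWM a) := Nat.mul_le_mul_left _ hM
    _ = p * vdWL a * vdWM a := by ring
    _ ≤ vdWL (a + 1) * vdWM a :=
        Nat.mul_le_mul_right _ (Nat.le_of_dvd (vdWL_pos _) hdvd)

/-- the quotient L(a)/M(a) is weakly increasing for a ≥ 2
(stated via cross-multiplication, as M(a) > 0). -/
theorem L_div_M_monotone (a b : ℕ) (ha : 2 ≤ a) (hab : a ≤ b) :
    vdWL a * vdWM b ≤ vdWL b * vdWM a := by
  induction b, hab using Nat.le_induction with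
  | base => exact le_rfl
  | succ b hb ih =>
    have hb2 : 2 ≤ b := le_trans ha hb
    have step : vdWL b * vdWM (b + 1) ≤ vdWL (b + 1) * vdWM b := by
      by_cases hpp : IsPrimePow (b + 1)
      · obtain ⟨p, k, hp, hk, he⟩ := hpp
        exact step_pp b hb2 p k hp.nat_prime hk he
      · obtain ⟨h1, h2⟩ := step_npp b hb2 hpp
        rw [h1, h2]
    have hMb := vdWM_pos b hb2
    have key : vdWL a * vdWM (b + 1) * vdWM b ≤ vdWL (b + 1) * vdWM a * vdWM b := by
      calc vdWL a * vdWM (b + 1) * vdWM b = vdWL a * vdWM b * vdWM (b + 1) := by ring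
        _ ≤ vdWL b * vdWM a * vdWM (b + 1) := Nat.mul_le_mul_right _ ih
        _ = vdWM a * (vdWL b * vdWM (b + 1)) := by ring
        _ ≤ vdWM a * (vdWL (b + 1) * vdWM b) := Nat.mul_le_mul_left _ step
        _ = vdWL (b + 1) * vdWM a * vdWM b := by ring
    exact Nat.le_of_mul_le_mul_right key hMb
end

section
/- Let a > 1 and suppose M(a) = p^{α−1} where p^α exactly divides L(a) = lcm(1,...,a) and p^{α−1} is maximal among such prime powers. If a ≥ 4, then p ∈ {2, 3}. -/
lemma vdW_lcm_pos (s : Finset ℕ) (hs : 0 ∉ s) : 0 < s.lcm id := by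
  induction s using Finset.induction_on with
  | empty => simp [Finset.lcm_empty]
  | insert b t hx ih =>
    simp only [Finset.mem_insert, not_or] at hs
    rw [Finset.lcm_insert, lcm_eq_nat_lcm]
    have hb : b ≠ 0 := fun h => hs.1 h.symm
    have ht := ih hs.2
    exact Nat.pos_of_ne_zero (Nat.lcm_ne_zero hb ht.ne')

lemma vdW_lcm_fact_le (s : Finset ℕ) (hs : 0 ∉ s) (p n : ℕ)
    (h : ∀ i ∈ s, i.factorization p ≤ n) : (s.lcm id).factorization p ≤ n := by
  induction s using Finset.induction_on with
  | empty => simp [Finset.lcm_empty]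
  | insert b t hx ih =>
    simp only [Finset.mem_insert, not_or] at hs
    rw [Finset.lcm_insert]
    have hb : b ≠ 0 := fun hh => hs.1 hh.symm
    have ht := (vdW_lcm_pos t hs.2).ne'
    rw [show (id b : ℕ) = b from rfl, lcm_eq_nat_lcm, Nat.factorization_lcm hb ht]
    simp only [Finsupp.sup_apply, sup_le_iff]
    exact ⟨h b (Finset.mem_insert_self b t),
      ih hs.2 (fun i hi => h i (Finset.mem_insert_of_mem hi))⟩

lemma vdWL_factorization (a : ℕ) (ha : 1 ≤ a) (p : ℕ) (hp : p.Prime) :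
    (vdWL a).factorization p = Nat.log p a := by
  have h0 : (0 : ℕ) ∉ Finset.Icc 1 a := by simp
  have hLpos : 0 < vdWL a := vdW_lcm_pos _ h0
  apply le_antisymm
  · exact vdW_lcm_fact_le _ h0 p _ (fun i hi => by
      simp only [Finset.mem_Icc] at hi
      have hi0 : i ≠ 0 := by omega
      have hdvd : p ^ i.factorization p ∣ i := Nat.ordProj_dvd i p
      have hle : p ^ i.factorization p ≤ i := Nat.le_of_dvd (by omega) hdvd
      exact (Nat.le_log_iff_pow_le hp.one_lt (by omega)).mpr (hle.trans hi.2))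
  · rw [← Nat.Prime.pow_dvd_iff_le_factorization hp hLpos.ne']
    apply Finset.dvd_lcm
    simp only [Finset.mem_Icc]
    exact ⟨Nat.one_le_pow _ _ hp.pos, Nat.pow_log_le_self p (by omega)⟩

/-- if a ≥ 4 and the maximum M(a) is attained by the prime p,
i.e. M(a) = p^(α−1) where α is the exponent of p in L(a), then p ∈ {2,3}. -/
theorem M_attained_by_two_or_three (a : ℕ) (ha : 4 ≤ a) (p : ℕ) (hp : p.Prime)
    (hpa : p ≤ a) (hM : vdWM a = p ^ ((vdWL a).factorization p - 1)) :
    p = 2 ∨ p = 3 := by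
  by_contra hcon
  push_neg at hcon
  have hp5 : 5 ≤ p := by
    have h2le := hp.two_le
    have h4 : p ≠ 4 := by intro h; rw [h] at hp; exact absurd hp (by decide)
    omega
  have ha1 : 1 ≤ a := by omega
  have h2 : (vdWL a).factorization 2 = Nat.log 2 a := vdWL_factorization a ha1 2 Nat.prime_two
  have hpf : (vdWL a).factorization p = Nat.log p a := vdWL_factorization a ha1 p hp
  -- sup ≥ value at 2
  have h2mem : 2 ∈ (Finset.range (a + 1)).filter Nat.Prime := by
    simp [Finset.mem_filter, Nat.prime_two]; omega
  have hle : 2 ^ ((Nat.log 2 a) - 1) ≤ p ^ ((Nat.log p a) - 1) := by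
    rw [← hpf, ← hM, ← h2]
    exact Finset.le_sup (f := fun q => q ^ ((vdWL a).factorization q - 1)) h2mem
  have ht2ge : 2 ≤ (Nat.log 2 a) := by
    have := (Nat.le_log_iff_pow_le (by norm_num) (by omega)).mpr (show 2^2 ≤ a by omega)
    omega
  have htpge : 1 ≤ (Nat.log p a) := by
    exact Nat.log_pos hp.one_lt hpa
  have hub : p ^ (Nat.log p a) ≤ a := Nat.pow_log_le_self p (by omega)
  have hlb : a < 2 ^ ((Nat.log 2 a) + 1) := Nat.lt_pow_succ_log_self (by norm_num) a
  have e1 : p ^ (Nat.log p a) = p * p ^ ((Nat.log p a) - 1) := by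
    rw [← pow_succ']; congr 1; omega
  have e2 : 2 ^ ((Nat.log 2 a) + 1) = 4 * 2 ^ ((Nat.log 2 a) - 1) := by
    rw [show (Nat.log 2 a) + 1 = 2 + ((Nat.log 2 a) - 1) by omega, pow_add]; norm_num
  have h5 : 5 * p ^ ((Nat.log p a) - 1) ≤ a := by
    calc 5 * p ^ ((Nat.log p a) - 1) ≤ p * p ^ ((Nat.log p a) - 1) := by
          exact Nat.mul_le_mul_right _ hp5
      _ = p ^ (Nat.log p a) := e1.symm
      _ ≤ a := hub
  have hpow2 : 2 ≤ 2 ^ ((Nat.log 2 a) - 1) := by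
    calc 2 = 2 ^ 1 := rfl
      _ ≤ 2 ^ ((Nat.log 2 a) - 1) := Nat.pow_le_pow_right (by norm_num) (by omega)
  have : a < 4 * 2 ^ ((Nat.log 2 a) - 1) := by rw [← e2]; exact hlb
  have h52 : 5 * 2 ^ ((Nat.log 2 a) - 1) ≤ 5 * p ^ ((Nat.log p a) - 1) := Nat.mul_le_mul_left _ hle
  omega
end
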